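/- arXiv:2005.12348 — 3 statements merged into one kernel-verified Lean document; each statement's English description precedes it below -/
import Mathlib

section
/- Let X be a finite set, Y₁ and Y₂ finite sets, and R₁ ⊆ X × Y₁, R₂ ⊆ X × Y₂ relations. If for every subset σ ⊆ X the total weights agree, i.e. #{y ∈ Y₁ : (x,y) ∈ R₁ for all x ∈ σ} = #{y ∈ Y₂ : (x,y) ∈ R₂ for all x ∈ σ}, then there exists a bijection g : Y₁ → Y₂ such that (x,y) ∈ R₁ if and only if (x, g(y)) ∈ R₂ for all x ∈ X and y ∈ Y₁. -/
open Finset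

/-- Counting elements whose fiber contains `s` equals summing exact fiber counts
over supersets of `s`. -/
lemma dowker_count_superset_eq_sum {Y X : Type*} [Fintype Y] [Fintype X]
    [DecidableEq X] (f : Y → Finset X) (s : Finset X) :
    (univ.filter (fun y => s ⊆ f y)).card
      = ∑ t ∈ univ.filter (fun t => s ⊆ t), (univ.filter (fun y => f y = t)).card := by
  classical
  rw [Finset.card_eq_sum_card_fiberwise
    (f := f) (t := univ.filter (fun t => s ⊆ t))
    (fun y hy => by simpa using (mem_filter.mp hy).2)]
  refine Finset.sum_congr rfl fun t ht => ?_
  have hst : s ⊆ t := (mem_filter.mp ht).2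
  rw [Finset.filter_filter]
  congr 1
  apply Finset.filter_congr
  intro y _
  constructor
  · rintro ⟨_, h2⟩; exact h2
  · intro h2; exact ⟨h2 ▸ hst, h2⟩

/-- If the total weights of two relations agree on every subset of `X`,
then the relations agree up to a bijection on the `Y` side. -/
theorem dowker_total_weight_reconstruct
    (X Y₁ Y₂ : Type*) [Fintype X] [Fintype Y₁] [Fintype Y₂]
    (R₁ : X → Y₁ → Prop) (R₂ : X → Y₂ → Prop)
    (h : ∀ σ : Set X,
      Nat.card {y : Y₁ // ∀ x ∈ σ, R₁ x y} =
        Nat.card {y : Y₂ // ∀ x ∈ σ, R₂ x y}) :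
    ∃ g : Y₁ ≃ Y₂, ∀ (x : X) (y : Y₁), R₁ x y ↔ R₂ x (g y) := by
  classical
  set f₁ : Y₁ → Finset X := fun y => univ.filter (fun x => R₁ x y) with hf₁
  set f₂ : Y₂ → Finset X := fun y => univ.filter (fun x => R₂ x y) with hf₂
  have hmem₁ : ∀ x y, x ∈ f₁ y ↔ R₁ x y := by intro x y; simp [hf₁]
  have hmem₂ : ∀ x y, x ∈ f₂ y ↔ R₂ x y := by intro x y; simp [hf₂]
  -- superset counts agree
  have hN : ∀ s : Finset X,
      (univ.filter (fun y => s ⊆ f₁ y)).card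
        = (univ.filter (fun y => s ⊆ f₂ y)).card := by
    intro s
    have hs := h (↑s : Set X)
    rw [Nat.card_eq_fintype_card, Nat.card_eq_fintype_card,
      Fintype.card_subtype, Fintype.card_subtype] at hs
    have e1 : (univ.filter (fun y : Y₁ => ∀ x ∈ (↑s : Set X), R₁ x y))
        = univ.filter (fun y => s ⊆ f₁ y) := by
      apply Finset.filter_congr; intro y _
      simp [Finset.subset_iff, hmem₁]
    have e2 : (univ.filter (fun y : Y₂ => ∀ x ∈ (↑s : Set X), R₂ x y))
        = univ.filter (fun y => s ⊆ f₂ y) := by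
      apply Finset.filter_congr; intro y _
      simp [Finset.subset_iff, hmem₂]
    rw [e1, e2] at hs
    exact hs
  -- key step: if all proper supersets agree, then s agrees
  have step : ∀ s : Finset X,
      (∀ t : Finset X, s ⊂ t →
        (univ.filter (fun y => f₁ y = t)).card = (univ.filter (fun y => f₂ y = t)).card) →
      (univ.filter (fun y => f₁ y = s)).card = (univ.filter (fun y => f₂ y = s)).card := by
    intro s ih
    have hsplit : (univ.filter (fun t : Finset X => s ⊆ t))
        = insert s (univ.filter (fun t => s ⊂ t)) := by
      ext t
      simp only [mem_filter, mem_univ, true_and, mem_insert]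
      constructor
      · intro h1
        rcases lt_or_eq_of_le (Finset.le_iff_subset.mpr h1) with h2 | h2
        · exact Or.inr (Finset.lt_iff_ssubset.mp h2)
        · exact Or.inl h2.symm
      · rintro (rfl | h2)
        · exact Finset.Subset.refl _
        · exact h2.subset
    have hns : s ∉ univ.filter (fun t : Finset X => s ⊂ t) := by
      simp only [mem_filter, mem_univ, true_and]
      exact lt_irrefl s
    have q1 := dowker_count_superset_eq_sum f₁ s
    have q2 := dowker_count_superset_eq_sum f₂ s
    rw [hsplit, Finset.sum_insert hns] at q1 q2
    have hsum : ∑ t ∈ univ.filter (fun t : Finset X => s ⊂ t),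
        (univ.filter (fun y => f₁ y = t)).card
        = ∑ t ∈ univ.filter (fun t : Finset X => s ⊂ t),
        (univ.filter (fun y => f₂ y = t)).card := by
      refine Finset.sum_congr rfl fun t ht => ?_
      exact ih t (mem_filter.mp ht).2
    have := hN s
    omega
  -- strong induction on the codimension
  have key : ∀ s : Finset X,
      (univ.filter (fun y => f₁ y = s)).card
        = (univ.filter (fun y => f₂ y = s)).card := by
    have main : ∀ n : ℕ, ∀ s : Finset X, Fintype.card X - s.card ≤ n →
        (univ.filter (fun y => f₁ y = s)).card
          = (univ.filter (fun y => f₂ y = s)).card := by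
      intro n
      induction n with
      | zero =>
        intro s hs
        apply step
        intro t ht
        exfalso
        have h1 : s.card ≤ t.card := Finset.card_le_card ht.subset
        have h2 : s.card < t.card := Finset.card_lt_card ht
        have h3 : t.card ≤ Fintype.card X := Finset.card_le_univ t
        omega
      | succ n ihn =>
        intro s hs
        apply step
        intro t ht
        apply ihn
        have h2 : s.card < t.card := Finset.card_lt_card ht
        omega
    intro s
    exact main (Fintype.card X) s (Nat.sub_le _ _)
  -- build the equivalence fiberwise
  have hcard : ∀ s : Finset X,
      Fintype.card {y : Y₁ // f₁ y = s} = Fintype.card {y : Y₂ // f₂ y = s} := by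
    intro s
    rw [Fintype.card_subtype, Fintype.card_subtype]
    exact key s
  let e : ∀ s : Finset X, {y : Y₁ // f₁ y = s} ≃ {y : Y₂ // f₂ y = s} :=
    fun s => Fintype.equivOfCardEq (hcard s)
  let g : Y₁ ≃ Y₂ :=
    (Equiv.sigmaFiberEquiv f₁).symm.trans
      ((Equiv.sigmaCongrRight e).trans (Equiv.sigmaFiberEquiv f₂))
  refine ⟨g, fun x y => ?_⟩
  have hg : f₂ (g y) = f₁ y := (e (f₁ y) ⟨y, rfl⟩).2
  rw [← hmem₁ x y, ← hmem₂ x (g y), hg]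
end

section
/- Let R ⊆ X × Y be a relation. A nonempty finite subset σ ⊆ Y is a simplex of the dual Dowker complex D(Y,X,R^T) (i.e. there exists x ∈ X with (x,y) ∈ R for all y ∈ σ) if and only if there exists a simplex τ of the Dowker complex D(X,Y,R) (i.e. a nonempty finite τ ⊆ X admitting some y ∈ Y with (x,y) ∈ R for all x ∈ τ) such that σ ⊆ Y_τ, where Y_τ = {y ∈ Y : (x,y) ∈ R for all x ∈ τ}. Consequently, the space of global cosections of the cosheaf of costalks D(Y_τ,τ,(R|_{τ,Y_τ})^T) over D(X,Y,R) is simplicially isomorphic to D(Y,X,R^T). -/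
/-- Global cosections of the cosheaf representation form the dual Dowker
complex: a nonempty finite `σ ⊆ Y` is a simplex of `D(Y,X,Rᵀ)` iff it is
contained in `Y_τ` for some simplex `τ` of `D(X,Y,R)`. -/
theorem dowker_global_cosections_dual
    (X Y : Type*) (R : X → Y → Prop)
    (σ : Set Y) (hne : σ.Nonempty) (hfin : σ.Finite) :
    (∃ x : X, ∀ y ∈ σ, R x y) ↔
      ∃ τ : Set X, τ.Nonempty ∧ τ.Finite ∧ (∃ y : Y, ∀ x ∈ τ, R x y) ∧
        σ ⊆ {y : Y | ∀ x ∈ τ, R x y} := by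
  constructor
  · rintro ⟨x, hx⟩
    obtain ⟨y0, hy0⟩ := hne
    exact ⟨{x}, Set.singleton_nonempty x, Set.finite_singleton x,
      ⟨y0, by simpa using hx y0 hy0⟩,
      fun y hy x' hx' => by rw [Set.mem_singleton_iff] at hx'; subst hx'; exact hx y hy⟩
  · rintro ⟨τ, ⟨x, hxτ⟩, _, _, hsub⟩
    exact ⟨x, fun y hy => hsub hy x hxτ⟩
end

section
/- Let X and Y be finite sets and R ⊆ X × Y a relation. Let σ be a simplex of the dual Dowker complex D(Y,X,R^T), i.e. σ ⊆ Y is nonempty and there exists x ∈ X with (x,y) ∈ R for all y ∈ σ. Then the union of all simplices α of D(X,Y,R) satisfying σ ⊆ Y_α equals X_σ := {x ∈ X : (x,y) ∈ R for all y ∈ σ}; moreover X_σ is itself a simplex of D(X,Y,R) with σ ⊆ Y_{X_σ}, and it is the unique maximal such simplex under inclusion. (This is the key step in the cosheaf version of Dowker duality: Dual ∘ CoShvRep = CoShvRep ∘ Transp.) -/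
/-- Key step of cosheaf Dowker duality: for a simplex `σ` of the dual Dowker
complex, the union of all simplices `α` of `D(X,Y,R)` with `σ ⊆ Y_α` equals
`X_σ = {x | ∀ y ∈ σ, R x y}`; moreover `X_σ` is itself such a simplex and is
the unique maximal one under inclusion. -/
theorem dowker_duality_unique_maximal_simplex
    (X Y : Type*) [Fintype X] [Fintype Y] (R : X → Y → Prop)
    (σ : Set Y) (hσne : σ.Nonempty) (hσ : ∃ x : X, ∀ y ∈ σ, R x y) :
    (⋃ α ∈ {α : Set X | α.Nonempty ∧ (∃ y : Y, ∀ x ∈ α, R x y) ∧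
        σ ⊆ {y : Y | ∀ x ∈ α, R x y}}, α) = {x : X | ∀ y ∈ σ, R x y} ∧
    ({x : X | ∀ y ∈ σ, R x y}).Nonempty ∧
    (∃ y : Y, ∀ x ∈ {x : X | ∀ y' ∈ σ, R x y'}, R x y) ∧
    σ ⊆ {y : Y | ∀ x ∈ {x : X | ∀ y' ∈ σ, R x y'}, R x y} ∧
    (∀ α : Set X, α.Nonempty → (∃ y : Y, ∀ x ∈ α, R x y) →
      σ ⊆ {y : Y | ∀ x ∈ α, R x y} → α ⊆ {x : X | ∀ y ∈ σ, R x y}) := by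
  obtain ⟨x₀, hx₀⟩ := hσ
  obtain ⟨y₀, hy₀⟩ := hσne
  have hmax : ∀ α : Set X, α.Nonempty → (∃ y : Y, ∀ x ∈ α, R x y) →
      σ ⊆ {y : Y | ∀ x ∈ α, R x y} → α ⊆ {x : X | ∀ y ∈ σ, R x y} := by
    intro α _ _ hsub x hx y hy
    exact hsub hy x hx
  have hXσne : ({x : X | ∀ y ∈ σ, R x y}).Nonempty := ⟨x₀, hx₀⟩
  have hmem : {x : X | ∀ y ∈ σ, R x y} ∈ {α : Set X | α.Nonempty ∧
      (∃ y : Y, ∀ x ∈ α, R x y) ∧ σ ⊆ {y : Y | ∀ x ∈ α, R x y}} := by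
    refine ⟨hXσne, ⟨y₀, fun x hx => hx y₀ hy₀⟩, fun y hy x hx => hx y hy⟩
  refine ⟨?_, hXσne, ⟨y₀, fun x hx => hx y₀ hy₀⟩, fun y hy x hx => hx y hy, hmax⟩
  apply Set.Subset.antisymm
  · intro x hx
    simp only [Set.mem_iUnion] at hx
    obtain ⟨α, ⟨h1, h2, h3⟩, hxα⟩ := hx
    exact hmax α h1 h2 h3 hxα
  · intro x hx
    simp only [Set.mem_iUnion]
    exact ⟨_, hmem, hx⟩
end
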